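/- Uniqueness of the adjoint solution: under the hyperbolicity hypotheses (ker(X(1)-I) = span{f(γ(0))}, w the unique left nullvector of X(1)-I with wᵀ f(γ(0)) = 1), the function λ(t) := X(t)⁻ᵀ w is the unique solution of the boundary-value problem μ'ᵀ = -T μᵀ Df(γ), μ(0) = μ(1), ∫₀¹ μ(t)ᵀ f(γ(t)) dt = 1. -/

import Mathlib

open Matrix

attribute [local instance] Matrix.normedAddCommGroup Matrix.normedSpace

private lemma adjoint_swap_id1 {n : ℕ} (D M : Matrix (Fin n) (Fin n) ℝ) (v : Fin n → ℝ)
    (i : Fin n) (T : ℝ) :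
    ∑ j, ((T • (D * M)) j i * v j + M j i * (-(T • (Dᵀ *ᵥ v))) j) = 0 := by
  simp only [Matrix.smul_apply, Pi.neg_apply, Pi.smul_apply, smul_eq_mul, Matrix.mul_apply,
    Matrix.mulVec, dotProduct, Matrix.transpose_apply, Finset.sum_mul, Finset.mul_sum,
    mul_neg, neg_mul, Finset.sum_neg_distrib, Finset.sum_add_distrib]
  rw [add_neg_eq_zero, Finset.sum_comm]
  apply Finset.sum_congr rfl; intro j _; apply Finset.sum_congr rfl; intro k _; ring

private lemma adjoint_swap_id2 {n : ℕ} (D : Matrix (Fin n) (Fin n) ℝ) (v g : Fin n → ℝ)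
    (T : ℝ) :
    ∑ j, ((-(T • (Dᵀ *ᵥ v))) j * g j + v j * (T • (D *ᵥ g)) j) = 0 := by
  simp only [Matrix.smul_apply, Pi.neg_apply, Pi.smul_apply, smul_eq_mul, Matrix.mul_apply,
    Matrix.mulVec, dotProduct, Matrix.transpose_apply, Finset.sum_mul, Finset.mul_sum,
    mul_neg, neg_mul, Finset.sum_neg_distrib, Finset.sum_add_distrib]
  rw [neg_add_eq_zero, Finset.sum_comm]
  apply Finset.sum_congr rfl; intro j _; apply Finset.sum_congr rfl; intro k _; ring

/-- under the hyperbolicity hypotheses on the monodromy matrix,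
`λ(t) := X(t)⁻ᵀ w` is the unique solution of the adjoint boundary-value problem
`μ'ᵀ = -T μᵀ Df(γ)`, `μ(0) = μ(1)`, `∫₀¹ μᵀ f(γ) dt = 1`. -/
theorem adjoint_bvp_unique_solution {n : ℕ} (T : ℝ) (hT : 0 < T)
    (f : (Fin n → ℝ) → (Fin n → ℝ)) (Df : (Fin n → ℝ) → Matrix (Fin n) (Fin n) ℝ)
    (hf : ContDiff ℝ 1 f)
    (hDf : ∀ x, HasFDerivAt f ((Df x).mulVecLin.toContinuousLinearMap) x)
    (γ : ℝ → Fin n → ℝ) (hγ : ∀ t, HasDerivAt γ (T • f (γ t)) t)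
    (hper : ∀ t, γ (t + 1) = γ t)
    (X : ℝ → Matrix (Fin n) (Fin n) ℝ)
    (hX : ∀ t, HasDerivAt X (T • (Df (γ t) * X t)) t)
    (hX0 : X 0 = 1) (hXinv : ∀ t, IsUnit (X t))
    (w : Fin n → ℝ)
    (hker : ∀ x : Fin n → ℝ, (X 1 - 1) *ᵥ x = 0 ↔ ∃ c : ℝ, x = c • f (γ 0))
    (hw : w ᵥ* X 1 = w) (hwn : w ⬝ᵥ f (γ 0) = 1)
    (hsurj : ∀ y : Fin n → ℝ, w ⬝ᵥ y = 0 →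
      ∃ x : Fin n → ℝ, w ⬝ᵥ x = 0 ∧ (X 1 - 1) *ᵥ x = y)
    (μ : ℝ → Fin n → ℝ)
    (hμ : ∀ t, HasDerivAt μ (-(T • ((Df (γ t))ᵀ *ᵥ μ t))) t)
    (hμper : μ 0 = μ 1)
    (hint : (∫ t in (0:ℝ)..1, μ t ⬝ᵥ f (γ t)) = 1) :
    ∀ t : ℝ, μ t = ((X t)⁻¹)ᵀ *ᵥ w := by
  -- Step 1: (X t)ᵀ *ᵥ μ t is constant
  have hnu : ∀ t : ℝ, (X t)ᵀ *ᵥ μ t = μ 0 := by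
    have hconst : ∀ (i : Fin n) (a b : ℝ),
        (∑ j, X a j i * μ a j) = ∑ j, X b j i * μ b j := by
      intro i a b
      have hder : ∀ t : ℝ, HasDerivAt (fun s => ∑ j, X s j i * μ s j) 0 t := by
        intro t
        have hXe : ∀ j k : Fin n, HasDerivAt (fun s => X s j k)
            ((T • (Df (γ t) * X t)) j k) t := fun j k =>
          hasDerivAt_pi.mp (hasDerivAt_pi.mp (hX t) j) k
        have hμe : ∀ j : Fin n, HasDerivAt (fun s => μ s j)
            ((-(T • ((Df (γ t))ᵀ *ᵥ μ t))) j) t := fun j => hasDerivAt_pi.mp (hμ t) j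
        have hsum : HasDerivAt (fun s => ∑ j, X s j i * μ s j)
            (∑ j, ((T • (Df (γ t) * X t)) j i * μ t j
              + X t j i * (-(T • ((Df (γ t))ᵀ *ᵥ μ t))) j)) t :=
          HasDerivAt.fun_sum (fun j _ => (hXe j i).mul (hμe j))
        rw [adjoint_swap_id1] at hsum
        exact hsum
      exact is_const_of_deriv_eq_zero (fun t => (hder t).differentiableAt)
        (fun t => (hder t).deriv) a b
    intro t
    funext i
    have : ((X t)ᵀ *ᵥ μ t) i = ((X 0)ᵀ *ᵥ μ 0) i := by
      simp only [Matrix.mulVec, dotProduct, Matrix.transpose_apply]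
      exact hconst i t 0
    rw [this, hX0]
    simp
  -- Step 2: μ t ⬝ᵥ f (γ t) is constant; with the integral condition, μ 0 ⬝ᵥ f (γ 0) = 1
  have hfγ : ∀ t : ℝ, HasDerivAt (fun s => f (γ s)) (T • (Df (γ t) *ᵥ f (γ t))) t := by
    intro t
    have := (hDf (γ t)).comp_hasDerivAt t (hγ t)
    simpa [Matrix.mulVec_smul, Function.comp_def] using this
  have hhconst : ∀ t : ℝ, μ t ⬝ᵥ f (γ t) = μ 0 ⬝ᵥ f (γ 0) := by
    intro t
    have hder : ∀ t : ℝ, HasDerivAt (fun s => μ s ⬝ᵥ f (γ s)) 0 t := by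
      intro t
      have hμe : ∀ j : Fin n, HasDerivAt (fun s => μ s j)
          ((-(T • ((Df (γ t))ᵀ *ᵥ μ t))) j) t := fun j => hasDerivAt_pi.mp (hμ t) j
      have hfe : ∀ j : Fin n, HasDerivAt (fun s => f (γ s) j)
          ((T • (Df (γ t) *ᵥ f (γ t))) j) t := fun j => hasDerivAt_pi.mp (hfγ t) j
      have hsum : HasDerivAt (fun s => ∑ j, μ s j * f (γ s) j)
          (∑ j, ((-(T • ((Df (γ t))ᵀ *ᵥ μ t))) j * f (γ t) j
            + μ t j * (T • (Df (γ t) *ᵥ f (γ t))) j)) t :=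
        HasDerivAt.fun_sum (fun j _ => (hμe j).mul (hfe j))
      rw [adjoint_swap_id2] at hsum
      exact hsum
    exact is_const_of_deriv_eq_zero (fun s => (hder s).differentiableAt)
      (fun s => (hder s).deriv) t 0
  have hμ0f : μ 0 ⬝ᵥ f (γ 0) = 1 := by
    rw [← hint, intervalIntegral.integral_congr (g := fun _ => μ 0 ⬝ᵥ f (γ 0))
      (fun t _ => hhconst t)]
    simp
  -- Step 3: μ 0 is a left fixed vector of X 1
  have hμ0X : μ 0 ᵥ* X 1 = μ 0 := by
    rw [← Matrix.mulVec_transpose]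
    calc (X 1)ᵀ *ᵥ μ 0 = (X 1)ᵀ *ᵥ μ 1 := by rw [hμper]
    _ = μ 0 := hnu 1
  -- Step 4: μ 0 = w
  have hv : ∀ z : Fin n → ℝ, (μ 0 - w) ⬝ᵥ z = 0 := by
    intro z
    set v : Fin n → ℝ := μ 0 - w with hvdef
    have hvX : v ᵥ* (X 1 - 1) = 0 := by
      rw [Matrix.vecMul_sub, Matrix.sub_vecMul, hμ0X, hw, Matrix.vecMul_one, hvdef]
      abel
    have hvf : v ⬝ᵥ f (γ 0) = 0 := by
      rw [hvdef, sub_dotProduct, hμ0f, hwn, sub_self]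
    set y : Fin n → ℝ := z - (w ⬝ᵥ z) • f (γ 0) with hydef
    have hwy : w ⬝ᵥ y = 0 := by
      rw [hydef, dotProduct_sub, dotProduct_smul, hwn, smul_eq_mul, mul_one,
        sub_self]
    obtain ⟨x, -, hx⟩ := hsurj y hwy
    have hvy : v ⬝ᵥ y = 0 := by
      rw [← hx, Matrix.dotProduct_mulVec, hvX, zero_dotProduct]
    have hz : z = y + (w ⬝ᵥ z) • f (γ 0) := by rw [hydef]; abel
    rw [hz, dotProduct_add, hvy, dotProduct_smul, smul_eq_mul, hvf, mul_zero,
      add_zero]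
  have hμ0w : μ 0 = w := by
    funext i
    have := hv (Pi.single i 1)
    simpa [dotProduct_single, sub_eq_zero] using this
  -- Step 5: conclude
  intro t
  have hdet : IsUnit (X t)ᵀ.det := by
    rw [Matrix.det_transpose]
    exact (Matrix.isUnit_iff_isUnit_det (X t)).mp (hXinv t)
  have h1 : (X t)ᵀ *ᵥ μ t = w := by rw [hnu t, hμ0w]
  calc μ t = (1 : Matrix (Fin n) (Fin n) ℝ) *ᵥ μ t := by rw [Matrix.one_mulVec]
    _ = (((X t)ᵀ)⁻¹ * (X t)ᵀ) *ᵥ μ t := by rw [Matrix.nonsing_inv_mul _ hdet]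
    _ = ((X t)ᵀ)⁻¹ *ᵥ ((X t)ᵀ *ᵥ μ t) := by rw [Matrix.mulVec_mulVec]
    _ = ((X t)⁻¹)ᵀ *ᵥ w := by rw [h1, Matrix.transpose_nonsing_inv]
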